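/- Fix q > 2. Let (X_n)_{n≥1} be i.i.d. random variables on (Ω, F, P) with mean zero, variance σ², and E_P|X|^q < ∞. Let (Ỹ_n)_{n≥1} be independent mean-zero Gaussian random variables on (Ω̃, F̃, P̃) with variances σ̃_k² := Var_{P̃}(Ỹ_k) = Var_P( X·1{|X| ≤ k^{1/q}} ), and set Ŷ_k := (σ/σ̃_k)·Ỹ_k. Then there exists a constant C(q) > 0 depending only on q such that for every integer m ≥ 1: Σ_{k=m}^∞ Var_{P̃}(Ỹ_k − Ŷ_k) / k^{2/q} ≤ 4·C(q)·E_P( |X|^q·1{|X|^q > m} ). -/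

import Mathlib

open MeasureTheory ProbabilityTheory

universe u

open Real Filter Finset
open scoped NNReal ENNReal


lemma variance_map_eq {Ω : Type*} [MeasurableSpace Ω] (μ : Measure Ω) (X : Ω → ℝ)
    (hX : Measurable X) : variance X μ = variance id (μ.map X) := by
  have hmean : (μ.map X)[id] = μ[X] := integral_map hX.aemeasurable aestronglyMeasurable_id
  rw [variance, variance, evariance, evariance, hmean,
    lintegral_map (by measurability) hX]
  rfl


lemma integrable_sq_mul_exp {b : ℝ} (hb : 0 < b) :
    Integrable (fun x : ℝ => x ^ 2 * Real.exp (-b * x ^ 2)) := by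
  have := integrable_rpow_mul_exp_neg_mul_sq hb (s := 2) (by norm_num)
  simpa [Real.rpow_two] using this

lemma integral_exp_eq {b : ℝ} (hb : 0 < b) :
    ∫ x : ℝ, Real.exp (-b * x ^ 2) = Real.sqrt (π / b) := integral_gaussian b

lemma integral_sq_exp {b : ℝ} (hb : 0 < b) :
    ∫ x : ℝ, x ^ 2 * Real.exp (-b * x ^ 2) = Real.sqrt (π / b) / (2 * b) := by
  have hderiv : ∀ x : ℝ, HasDerivAt (fun y : ℝ => y * Real.exp (-b * y ^ 2))
      (Real.exp (-b * x ^ 2) - 2 * b * (x ^ 2 * Real.exp (-b * x ^ 2))) x := by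
    intro x
    have h1 : HasDerivAt (fun y : ℝ => -b * y ^ 2) (-b * (2 * x)) x := by
      simpa using ((hasDerivAt_pow 2 x).const_mul (-b))
    have h2 := h1.exp
    have h3 := (hasDerivAt_id x).mul h2
    refine h3.congr_deriv ?_
    simp only [id]
    ring
  have hint : Integrable (fun x : ℝ => Real.exp (-b * x ^ 2) -
      2 * b * (x ^ 2 * Real.exp (-b * x ^ 2))) :=
    (integrable_exp_neg_mul_sq hb).sub ((integrable_sq_mul_exp hb).const_mul _)
  have hzero := integral_eq_zero_of_hasDerivAt_of_integrable hderiv hint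
    (integrable_mul_exp_neg_mul_sq hb)
  rw [integral_sub (integrable_exp_neg_mul_sq hb) ((integrable_sq_mul_exp hb).const_mul _),
    integral_const_mul, integral_exp_eq hb, sub_eq_zero] at hzero
  field_simp at hzero ⊢
  linarith

lemma integral_x_exp {b : ℝ} (hb : 0 < b) :
    ∫ x : ℝ, x * Real.exp (-b * x ^ 2) = 0 := by
  have hderiv : ∀ x : ℝ, HasDerivAt (fun y : ℝ => -(2*b)⁻¹ * Real.exp (-b * y ^ 2))
      (x * Real.exp (-b * x ^ 2)) x := by
    intro x
    have h1 : HasDerivAt (fun y : ℝ => -b * y ^ 2) (-b * (2 * x)) x := by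
      simpa using ((hasDerivAt_pow 2 x).const_mul (-b))
    have h3 := h1.exp.const_mul (-(2*b)⁻¹)
    refine h3.congr_deriv ?_
    field_simp
  exact integral_eq_zero_of_hasDerivAt_of_integrable hderiv
    (integrable_mul_exp_neg_mul_sq hb) ((integrable_exp_neg_mul_sq hb).const_mul _)

lemma gaussian_coe : ∀ (μ : ℝ) (v : ℝ≥0), gaussianPDF μ v
    = fun x => (((gaussianPDFReal μ v x).toNNReal : ℝ≥0) : ℝ≥0∞) := fun _ _ => rfl

lemma integral_gaussianReal_eq (v : ℝ≥0) (hv : v ≠ 0) (g : ℝ → ℝ) :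
    ∫ x, g x ∂(gaussianReal 0 v) = ∫ x, gaussianPDFReal 0 v x * g x := by
  rw [gaussianReal_of_var_ne_zero 0 hv, gaussian_coe,
    integral_withDensity_eq_integral_smul ((measurable_gaussianPDFReal 0 v).real_toNNReal) g]
  congr 1
  ext x
  simp [NNReal.smul_def, Real.coe_toNNReal _ (gaussianPDFReal_nonneg 0 v x)]

lemma integrable_gaussianReal_iff (v : ℝ≥0) (hv : v ≠ 0) (g : ℝ → ℝ) :
    Integrable g (gaussianReal 0 v) ↔ Integrable (fun x => gaussianPDFReal 0 v x * g x) := by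
  rw [gaussianReal_of_var_ne_zero 0 hv, gaussian_coe,
    integrable_withDensity_iff_integrable_smul ((measurable_gaussianPDFReal 0 v).real_toNNReal)]
  constructor <;> intro h <;> [skip; skip] <;>
  · apply h.congr
    filter_upwards with x
    simp [NNReal.smul_def, Real.coe_toNNReal _ (gaussianPDFReal_nonneg 0 v x)]


lemma pdf_rw (v : ℝ≥0) (hv : v ≠ 0) (g : ℝ → ℝ) (x : ℝ) :
    gaussianPDFReal 0 v x * g x = (Real.sqrt (2*π*v))⁻¹ * (g x * Real.exp (-(2*(v:ℝ))⁻¹ * x^2)) := by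
  have hvpos : (0:ℝ) < v := lt_of_le_of_ne v.coe_nonneg (by exact_mod_cast (Ne.symm hv))
  rw [gaussianPDFReal]
  have : -(x - 0)^2/(2*(v:ℝ)) = -(2*(v:ℝ))⁻¹ * x^2 := by field_simp; ring
  rw [this]; ring

lemma variance_id_gaussianReal (v : ℝ≥0) : variance id (gaussianReal 0 v) = v := by
  by_cases hv : v = 0
  · subst hv
    rw [gaussianReal_zero_var]
    have h1 : (Measure.dirac (0:ℝ))[id] = 0 := by simp
    rw [variance, evariance, h1]
    rw [lintegral_dirac' _ (by measurability)]
    simp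
  · have hvpos : (0:ℝ) < v := lt_of_le_of_ne v.coe_nonneg (by exact_mod_cast (Ne.symm hv))
    have hvne : (v:ℝ) ≠ 0 := ne_of_gt hvpos
    set b : ℝ := (2*(v:ℝ))⁻¹ with hbdef
    have hb : 0 < b := by positivity
    have hsq : ∫ x, x^2 ∂(gaussianReal 0 v) = v := by
      rw [integral_gaussianReal_eq v hv]
      simp only [pdf_rw v hv (fun y => y^2)]
      rw [integral_const_mul, integral_sq_exp hb]
      have h2 : π / b = 2*π*(v:ℝ) := by rw [hbdef]; field_simp [hvne]
      have h3 : (2:ℝ) * b = (v:ℝ)⁻¹ := by rw [hbdef]; field_simp [hvne]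
      rw [h2, h3]
      have h4 : Real.sqrt (2*π*(v:ℝ)) ≠ 0 := by positivity
      field_simp
    have hmean : ∫ x, x ∂(gaussianReal 0 v) = 0 := by
      rw [integral_gaussianReal_eq v hv]
      simp only [pdf_rw v hv (fun y => y)]
      rw [integral_const_mul]
      have : ∫ x : ℝ, x * Real.exp (-b * x ^ 2) = 0 := integral_x_exp hb
      rw [this, mul_zero]
    have hmem : MemLp (id : ℝ → ℝ) 2 (gaussianReal 0 v) := by
      rw [memLp_two_iff_integrable_sq aestronglyMeasurable_id]
      rw [integrable_gaussianReal_iff v hv]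
      apply Integrable.congr (((integrable_sq_mul_exp hb).const_mul ((Real.sqrt (2*π*v))⁻¹)))
      filter_upwards with x
      rw [pdf_rw v hv (fun y => id y ^ 2) x, hbdef]
      simp only [id]
    have := variance_of_integral_eq_zero hmem.1.aemeasurable (by simpa using hmean)
    rw [this]
    simpa using hsq

lemma trunc_var_bound {Ω : Type*} [MeasurableSpace Ω] (P : Measure Ω) [IsProbabilityMeasure P]
    (X : Ω → ℝ) (hX : Measurable X) (hmean : ∫ ω, X ω ∂P = 0) (hX2 : MemLp X 2 P) (a : ℝ) :
    variance (fun ω => if |X ω| ≤ a then X ω else 0) P ≤ variance X P ∧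
    variance X P - variance (fun ω => if |X ω| ≤ a then X ω else 0) P ≤
      2 * ∫ ω, (if |X ω| ≤ a then 0 else X ω) ^ 2 ∂P := by
  set T : Ω → ℝ := fun ω => if |X ω| ≤ a then X ω else 0 with hTdef
  set U : Ω → ℝ := fun ω => if |X ω| ≤ a then 0 else X ω with hUdef
  have hset : MeasurableSet {ω | |X ω| ≤ a} := measurableSet_le hX.abs measurable_const
  have hTm : Measurable T := hX.ite hset measurable_const
  have hUm : Measurable U := measurable_const.ite hset hX
  have hTle : ∀ ω, ‖T ω‖ ≤ ‖X ω‖ := by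
    intro ω; simp only [hTdef, Real.norm_eq_abs]; split_ifs <;> simp [abs_nonneg]
  have hUle : ∀ ω, ‖U ω‖ ≤ ‖X ω‖ := by
    intro ω; simp only [hUdef, Real.norm_eq_abs]; split_ifs <;> simp [abs_nonneg]
  have memT : MemLp T 2 P := hX2.of_le hTm.aestronglyMeasurable (ae_of_all _ hTle)
  have memU : MemLp U 2 P := hX2.of_le hUm.aestronglyMeasurable (ae_of_all _ hUle)
  have hTint : Integrable T P := memT.integrable one_le_two
  have hUint : Integrable U P := memU.integrable one_le_two
  have hsqX : ∀ ω, X ω ^ 2 = T ω ^ 2 + U ω ^ 2 := by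
    intro ω; simp only [hTdef, hUdef]; split_ifs <;> ring
  have hsum : ∀ ω, T ω + U ω = X ω := by
    intro ω; simp only [hTdef, hUdef]; split_ifs <;> ring
  have hIX2 : ∫ ω, X ω ^ 2 ∂P = (∫ ω, T ω ^ 2 ∂P) + ∫ ω, U ω ^ 2 ∂P := by
    rw [← integral_add memT.integrable_sq memU.integrable_sq]
    exact integral_congr_ae (ae_of_all _ fun ω => hsqX ω)
  have hIU : ∫ ω, T ω ∂P = - ∫ ω, U ω ∂P := by
    have : (∫ ω, T ω ∂P) + ∫ ω, U ω ∂P = 0 := by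
      rw [← integral_add hTint hUint]
      rw [← hmean]
      exact integral_congr_ae (ae_of_all _ fun ω => hsum ω)
    linarith
  have hvarX : variance X P = ∫ ω, X ω ^ 2 ∂P := by
    rw [variance_eq_sub hX2]
    simp only [Pi.pow_apply]
    rw [hmean]
    ring
  have hvarT : variance T P = (∫ ω, T ω ^ 2 ∂P) - (∫ ω, T ω ∂P) ^ 2 := by
    rw [variance_eq_sub memT]; rfl
  have hvarU : variance U P = (∫ ω, U ω ^ 2 ∂P) - (∫ ω, U ω ∂P) ^ 2 := by
    rw [variance_eq_sub memU]; rfl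
  have hU2 : (∫ ω, U ω ∂P) ^ 2 ≤ ∫ ω, U ω ^ 2 ∂P := by
    have := variance_nonneg U P
    rw [hvarU] at this; linarith
  have hUsq_nonneg : 0 ≤ ∫ ω, U ω ^ 2 ∂P := integral_nonneg fun ω => sq_nonneg _
  constructor
  · rw [hvarX, hvarT, hIX2, hIU]
    nlinarith [sq_nonneg (∫ ω, U ω ∂P)]
  · rw [hvarX, hvarT, hIX2, hIU]
    nlinarith

lemma var_term_le (v σ : ℝ) (hv : 0 ≤ v) (hσ : 0 ≤ σ) (hvle : v ≤ σ^2) :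
    (1 - σ/Real.sqrt v)^2 * v ≤ σ^2 - v := by
  rcases eq_or_lt_of_le hv with h0 | hpos
  · rw [← h0]; simp only [mul_zero, sub_zero]; positivity
  · have hs : 0 < Real.sqrt v := Real.sqrt_pos.2 hpos
    have hsq : Real.sqrt v ^ 2 = v := Real.sq_sqrt hv
    have hsle : Real.sqrt v ≤ σ := by
      rw [← Real.sqrt_sq hσ]; exact Real.sqrt_le_sqrt hvle
    have expand : (1 - σ/Real.sqrt v)^2 * v = v - 2*σ*Real.sqrt v + σ^2 := by
      field_simp
      nlinarith [hsq]
    rw [expand]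
    nlinarith [hsq, mul_le_mul_of_nonneg_left hsle hs.le]

lemma bernoulli_step (q : ℝ) (hq : 2 < q) (i : ℕ) :
    1/((i:ℝ)+1)^(2/q) ≤ (((i:ℝ)+1)^((q-2)/q) - ((i:ℝ))^((q-2)/q))/((q-2)/q) := by
  have hq0 : (0:ℝ) < q := by linarith
  have hβpos : 0 < (q-2)/q := div_pos (by linarith) hq0
  have hβle : (q-2)/q ≤ 1 := by rw [div_le_one hq0]; linarith
  set β := (q-2)/q with hβ
  set j : ℝ := (i:ℝ)+1 with hj
  have hjpos : (0:ℝ) < j := by positivity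
  have hj1 : (1:ℝ) ≤ j := by simp [hj]
  have hinv : 1/j ≤ 1 := by rw [div_le_one hjpos]; exact hj1
  have hs : (-1:ℝ) ≤ -(1/j) := by linarith
  have key := rpow_one_add_le_one_add_mul_self hs hβpos.le hβle
  have hfrac : (0:ℝ) ≤ 1 + -(1/j) := by linarith
  have h1 : (i:ℝ) = (1 + -(1/j)) * j := by
    have hne : j ≠ 0 := hjpos.ne'
    field_simp
    rw [hj]; ring
  have h2 : ((i:ℝ))^β = (1 + -(1/j))^β * j^β := by
    rw [h1, Real.mul_rpow hfrac hjpos.le]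
  have h3 : ((i:ℝ))^β ≤ (1 + β * -(1/j)) * j^β := by
    rw [h2]
    exact mul_le_mul_of_nonneg_right key (Real.rpow_nonneg hjpos.le _)
  have h4 : (1 + β * -(1/j)) * j^β = j^β - β * (j^β / j) := by ring
  have h5 : j^β / j = 1/j^(2/q) := by
    have hsub := Real.rpow_sub hjpos β 1
    rw [Real.rpow_one] at hsub
    rw [← hsub, show β - 1 = -(2/q) by rw [hβ]; field_simp; ring,
      Real.rpow_neg hjpos.le, one_div]
  rw [le_div_iff₀ hβpos]
  rw [h4, h5] at h3
  linarith

lemma sum_bound (q : ℝ) (hq : 2 < q) (m n : ℕ) (hm : 1 ≤ m) (x : ℝ) :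
    ∑ k ∈ Finset.range n,
      (if m ≤ k then (2/(k:ℝ)^(2/q)) * (if (k:ℝ) < |x|^q then x^2 else 0) else 0)
    ≤ if (m:ℝ) < |x|^q then (2*(q/(q-2))) * |x|^q else 0 := by
  have hq0 : (0:ℝ) < q := by linarith
  have hβpos : 0 < (q-2)/q := div_pos (by linarith) hq0
  by_cases hx : (m:ℝ) < |x|^q
  · rw [if_pos hx]
    have hxpos : (0:ℝ) < |x| := by
      by_contra h
      push_neg at h
      have h' : |x| = 0 := le_antisymm h (abs_nonneg x)
      rw [h', Real.zero_rpow hq0.ne'] at hx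
      have : (1:ℝ) ≤ (m:ℝ) := by exact_mod_cast hm
      linarith
    set N : ℕ := ⌊|x|^q⌋₊ with hN
    have step1 : ∑ k ∈ Finset.range n,
        (if m ≤ k then (2/(k:ℝ)^(2/q)) * (if (k:ℝ) < |x|^q then x^2 else 0) else 0)
        ≤ ∑ k ∈ Finset.Icc 1 N, 2/(k:ℝ)^(2/q) * x^2 := by
      rw [← Finset.sum_filter_add_sum_filter_not (Finset.range n)
        (fun k => m ≤ k ∧ (k:ℝ) < |x|^q)]
      have hz : ∀ k ∈ (Finset.range n).filter (fun k => ¬(m ≤ k ∧ (k:ℝ) < |x|^q)),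
          (if m ≤ k then (2/(k:ℝ)^(2/q)) * (if (k:ℝ) < |x|^q then x^2 else 0) else 0) = 0 := by
        intro k hk
        rw [Finset.mem_filter] at hk
        by_cases h1 : m ≤ k
        · rw [if_pos h1, if_neg (fun h => hk.2 ⟨h1, h⟩), mul_zero]
        · rw [if_neg h1]
      rw [Finset.sum_eq_zero hz, add_zero]
      have hterm : ∀ k ∈ (Finset.range n).filter (fun k => m ≤ k ∧ (k:ℝ) < |x|^q),
          (if m ≤ k then (2/(k:ℝ)^(2/q)) * (if (k:ℝ) < |x|^q then x^2 else 0) else 0)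
          = 2/(k:ℝ)^(2/q) * x^2 := by
        intro k hk
        rw [Finset.mem_filter] at hk
        rw [if_pos hk.2.1, if_pos hk.2.2]
      rw [Finset.sum_congr rfl hterm]
      apply Finset.sum_le_sum_of_subset_of_nonneg
      · intro k hk
        rw [Finset.mem_filter] at hk
        rw [Finset.mem_Icc]
        exact ⟨le_trans hm hk.2.1, Nat.le_floor hk.2.2.le⟩
      · intro k _ _
        positivity
    have step2 : ∑ k ∈ Finset.Icc 1 N, 2/(k:ℝ)^(2/q) * x^2 ≤ 2*(q/(q-2)) * |x|^q := by
      rw [← Finset.Ico_add_one_right_eq_Icc, Finset.sum_Ico_eq_sum_range]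
      norm_num
      have hterm : ∀ i ∈ Finset.range N, 2/(1+(i:ℝ))^(2/q) * x^2 ≤
          (2*x^2/((q-2)/q)) * ((((i+1:ℕ)):ℝ)^((q-2)/q) - ((i:ℕ):ℝ)^((q-2)/q)) := by
        intro i _
        have hb := bernoulli_step q hq i
        have hc : (1+(i:ℝ)) = (i:ℝ)+1 := by ring
        rw [hc]
        calc 2/((i:ℝ)+1)^(2/q) * x^2 = (2*x^2) * (1/((i:ℝ)+1)^(2/q)) := by ring
          _ ≤ (2*x^2) * ((((i:ℝ)+1)^((q-2)/q) - ((i:ℝ))^((q-2)/q))/((q-2)/q)) :=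
              mul_le_mul_of_nonneg_left hb (by positivity)
          _ = (2*x^2/((q-2)/q)) * ((((i+1:ℕ)):ℝ)^((q-2)/q) - ((i:ℕ):ℝ)^((q-2)/q)) := by
              push_cast; ring
      apply le_trans (Finset.sum_le_sum hterm)
      rw [← Finset.mul_sum]
      rw [Finset.sum_range_sub (fun j : ℕ => ((j:ℕ):ℝ)^((q-2)/q))]
      have hNle : ((N:ℝ)) ≤ |x|^q := Nat.floor_le (by positivity)
      have h6 : ((N:ℝ))^((q-2)/q) ≤ (|x|^q)^((q-2)/q) :=
        Real.rpow_le_rpow (Nat.cast_nonneg N) hNle hβpos.le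
      have h7 : (|x|^q)^((q-2)/q) = |x|^(q-2) := by
        rw [← Real.rpow_mul (abs_nonneg x)]
        congr 1
        field_simp
      have h8 : x^2 * |x|^(q-2) = |x|^q := by
        rw [← sq_abs, ← Real.rpow_natCast |x| 2, ← Real.rpow_add hxpos]
        congr 1
        push_cast; ring
      have h9 : (0:ℝ)^((q-2)/q) = 0 := Real.zero_rpow hβpos.ne'
      simp only [Nat.cast_zero, h9, sub_zero]
      calc (2*x^2/((q-2)/q)) * ((N:ℝ))^((q-2)/q)
          ≤ (2*x^2/((q-2)/q)) * |x|^(q-2) := by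
            apply mul_le_mul_of_nonneg_left (h7 ▸ h6) (by positivity)
        _ = 2*(q/(q-2)) * |x|^q := by
            rw [← h8]
            field_simp
    exact le_trans step1 step2
  · rw [if_neg hx]
    apply le_of_eq
    apply Finset.sum_eq_zero
    intro k hk
    by_cases h1 : m ≤ k
    · rw [if_pos h1, if_neg, mul_zero]
      intro h
      apply hx
      calc (m:ℝ) ≤ (k:ℝ) := by exact_mod_cast h1
        _ < |x|^q := h
    · rw [if_neg h1]

/-- **Partial sums of variances of rescaled truncated Gaussians.**  Fix `q > 2`.  There is
a constant `C(q) > 0` depending only on `q` such that: if `X` has mean zero, variance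
`σ²`, and `E_P|X|^q < ∞` under `P`, and `(Ỹ k)_{k≥1}` are independent mean-zero Gaussians
on `(Ω̃, P̃)` with variances `σ̃_k² = Var_P(X·1{|X| ≤ k^{1/q}})`, then, setting
`Ŷ k := (σ/σ̃_k)·Ỹ k`, for every integer `m ≥ 1`,
`∑_{k=m}^∞ Var_{P̃}(Ỹ k − Ŷ k) / k^{2/q} ≤ 4 C(q) E_P(|X|^q·1{|X|^q > m})`
(the sum converges). -/
theorem tail_variance_of_rescaled_truncations (q : ℝ) (hq : 2 < q) :
    ∃ C : ℝ, 0 < C ∧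
      ∀ (Ω Ω' : Type u) [MeasurableSpace Ω] [MeasurableSpace Ω']
        (P : Measure Ω) [IsProbabilityMeasure P]
        (P' : Measure Ω') [IsProbabilityMeasure P']
        (X : Ω → ℝ) (σ : ℝ) (Y : ℕ → Ω' → ℝ),
        Measurable X →
        (∫ ω, X ω ∂P = 0) →
        0 ≤ σ →
        variance X P = σ ^ 2 →
        Integrable (fun ω => |X ω| ^ q) P →
        (∀ k, Measurable (Y k)) →
        iIndepFun Y P' →
        (∀ k : ℕ, 1 ≤ k → Measure.map (Y k) P' =
          gaussianReal 0
            (variance (fun ω => if |X ω| ≤ (k : ℝ) ^ (1 / q) then X ω else 0) P).toNNReal) →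
        ∀ m : ℕ, 1 ≤ m →
          Summable (fun k : ℕ => if m ≤ k then
              variance (fun ω => Y k ω -
                  (σ / Real.sqrt (variance
                    (fun ω' => if |X ω'| ≤ (k : ℝ) ^ (1 / q) then X ω' else 0) P)) * Y k ω)
                P' / (k : ℝ) ^ (2 / q)
            else 0) ∧
          (∑' k : ℕ, if m ≤ k then
              variance (fun ω => Y k ω -
                  (σ / Real.sqrt (variance
                    (fun ω' => if |X ω'| ≤ (k : ℝ) ^ (1 / q) then X ω' else 0) P)) * Y k ω)
                P' / (k : ℝ) ^ (2 / q)
            else 0)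
            ≤ 4 * C * ∫ ω in {ω | (m : ℝ) < |X ω| ^ q}, |X ω| ^ q ∂P := by
  have hq0 : (0:ℝ) < q := by linarith
  have hq2 : (0:ℝ) < q - 2 := by linarith
  refine ⟨q / (2*(q-2)), by positivity, ?_⟩
  intro Ω Ω' _ _ P _ P' _ X σ Y hX hmean hσ hvarX hqint hY hindep hmap m hm
  -- basic integrability
  have hXq : MemLp X (ENNReal.ofReal q) P := by
    have hne : ENNReal.ofReal q ≠ 0 := by
      simp only [ne_eq, ENNReal.ofReal_eq_zero, not_le]; linarith
    have htop : ENNReal.ofReal q ≠ ⊤ := ENNReal.ofReal_ne_top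
    rw [← memLp_norm_rpow_iff hX.aestronglyMeasurable hne htop,
      ENNReal.toReal_ofReal hq0.le, ENNReal.div_self hne htop,
      memLp_one_iff_integrable]
    simpa only [Real.norm_eq_abs] using hqint
  have hX2 : MemLp X 2 P := by
    refine hXq.mono_exponent ?_
    rw [show (2:ℝ≥0∞) = ENNReal.ofReal 2 by simp]
    exact ENNReal.ofReal_le_ofReal hq.le
  -- the basic iff
  have hiff : ∀ (k : ℕ) (x : ℝ), ((k:ℝ)^(1/q) < |x|) ↔ ((k:ℝ) < |x|^q) := by
    intro k x
    have hpow : ((k:ℝ)^(1/q))^q = (k:ℝ) := by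
      rw [← Real.rpow_mul (Nat.cast_nonneg k), one_div, inv_mul_cancel₀ hq0.ne',
        Real.rpow_one]
    have h := Real.rpow_lt_rpow_iff (x := (k:ℝ)^(1/q)) (y := |x|)
      (Real.rpow_nonneg (Nat.cast_nonneg k) _) (abs_nonneg x) hq0
    rw [hpow] at h
    exact h.symm
  have hseteq : ∀ k : ℕ, {ω | (k:ℝ) < |X ω|^q} = {ω | (k:ℝ)^(1/q) < |X ω|} := by
    intro k
    ext ω
    simp only [Set.mem_setOf_eq]
    exact (hiff k (X ω)).symm
  have hmset : ∀ k : ℕ, MeasurableSet {ω | (k:ℝ) < |X ω|^q} := by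
    intro k
    rw [hseteq k]
    exact measurableSet_lt measurable_const hX.abs
  -- key bound per k
  have key : ∀ k : ℕ, m ≤ k →
      variance (fun ω => Y k ω - (σ / Real.sqrt (variance
        (fun ω' => if |X ω'| ≤ (k : ℝ) ^ (1 / q) then X ω' else 0) P)) * Y k ω) P'
      ≤ 2 * ∫ ω, (if (k:ℝ) < |X ω|^q then X ω^2 else 0) ∂P := by
    intro k hk
    have hk1 : 1 ≤ k := le_trans hm hk
    set v := variance (fun ω' => if |X ω'| ≤ (k : ℝ) ^ (1 / q) then X ω' else 0) P with hv
    have hfun : (fun ω => Y k ω - (σ / Real.sqrt v) * Y k ω)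
        = fun ω => (1 - σ / Real.sqrt v) * Y k ω := by funext ω; ring
    rw [hfun, variance_const_mul]
    have hYvar : variance (Y k) P' = v := by
      rw [variance_map_eq P' (Y k) (hY k), hmap k hk1, _root_.variance_id_gaussianReal]
      exact Real.coe_toNNReal _ (variance_nonneg _ _)
    rw [hYvar]
    have hv0 : 0 ≤ v := variance_nonneg _ _
    obtain ⟨hvle, hgap⟩ := trunc_var_bound P X hX hmean hX2 ((k:ℝ)^(1/q))
    rw [hvarX] at hvle hgap
    have h1 : (1 - σ / Real.sqrt v)^2 * v ≤ σ^2 - v :=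
      var_term_le v σ hv0 hσ hvle
    have hUeq : ∀ ω, (if |X ω| ≤ (k:ℝ)^(1/q) then 0 else X ω)^2
        = (if (k:ℝ) < |X ω|^q then X ω^2 else 0) := by
      intro ω
      by_cases h : |X ω| ≤ (k:ℝ)^(1/q)
      · rw [if_pos h, if_neg]
        · norm_num
        · intro hlt
          exact absurd ((hiff k (X ω)).2 hlt) (not_lt.2 h)
      · rw [if_neg h, if_pos ((hiff k (X ω)).1 (not_le.1 h))]
    have h2 : ∫ ω, (if |X ω| ≤ (k:ℝ)^(1/q) then 0 else X ω)^2 ∂P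
        = ∫ ω, (if (k:ℝ) < |X ω|^q then X ω^2 else 0) ∂P :=
      integral_congr_ae (ae_of_all _ hUeq)
    rw [h2] at hgap
    linarith
  -- integrability of pieces
  have hXsq : Integrable (fun ω => X ω^2) P := hX2.integrable_sq
  have hWint : ∀ k : ℕ, Integrable (fun ω => if (k:ℝ) < |X ω|^q then X ω^2 else 0) P := by
    intro k
    have heq : (fun ω => if (k:ℝ) < |X ω|^q then X ω^2 else 0)
        = Set.indicator {ω | (k:ℝ) < |X ω|^q} (fun ω => X ω^2) := by
      funext ω
      simp [Set.indicator_apply, Set.mem_setOf_eq]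
    rw [heq]
    exact hXsq.indicator (hmset k)
  have hHint : ∀ k : ℕ, Integrable (fun ω => if m ≤ k then
      (2/(k:ℝ)^(2/q)) * (if (k:ℝ) < |X ω|^q then X ω^2 else 0) else 0) P := by
    intro k
    by_cases hk : m ≤ k
    · simp only [if_pos hk]
      exact (hWint k).const_mul _
    · simp only [if_neg hk]
      exact integrable_zero _ _ _
  have hBint : Integrable (fun ω => if (m:ℝ) < |X ω|^q then (2*(q/(q-2))) * |X ω|^q else 0) P := by
    have heq : (fun ω => if (m:ℝ) < |X ω|^q then (2*(q/(q-2))) * |X ω|^q else 0)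
        = Set.indicator {ω | (m:ℝ) < |X ω|^q} (fun ω => (2*(q/(q-2))) * |X ω|^q) := by
      funext ω
      simp [Set.indicator_apply, Set.mem_setOf_eq]
    rw [heq]
    exact (hqint.const_mul _).indicator (hmset m)
  have hBeq : ∫ ω, (if (m:ℝ) < |X ω|^q then (2*(q/(q-2))) * |X ω|^q else 0) ∂P
      = 4 * (q/(2*(q-2))) * ∫ ω in {ω | (m:ℝ) < |X ω|^q}, |X ω|^q ∂P := by
    have heq : (fun ω => if (m:ℝ) < |X ω|^q then (2*(q/(q-2))) * |X ω|^q else 0)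
        = Set.indicator {ω | (m:ℝ) < |X ω|^q} (fun ω => (2*(q/(q-2))) * |X ω|^q) := by
      funext ω
      simp [Set.indicator_apply, Set.mem_setOf_eq]
    rw [heq, integral_indicator (hmset m), integral_const_mul]
    field_simp
    ring
  -- nonnegativity of the terms
  have hFnonneg : ∀ k : ℕ, 0 ≤ (if m ≤ k then
      variance (fun ω => Y k ω - (σ / Real.sqrt (variance
        (fun ω' => if |X ω'| ≤ (k : ℝ) ^ (1 / q) then X ω' else 0) P)) * Y k ω) P'
        / (k : ℝ) ^ (2 / q) else 0) := by
    intro k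
    by_cases hk : m ≤ k
    · rw [if_pos hk]
      exact div_nonneg (variance_nonneg _ _) (Real.rpow_nonneg (Nat.cast_nonneg k) _)
    · rw [if_neg hk]
  -- partial sums bound
  have hchain : ∀ n : ℕ, (∑ k ∈ Finset.range n, if m ≤ k then
      variance (fun ω => Y k ω - (σ / Real.sqrt (variance
        (fun ω' => if |X ω'| ≤ (k : ℝ) ^ (1 / q) then X ω' else 0) P)) * Y k ω) P'
        / (k : ℝ) ^ (2 / q) else 0)
      ≤ 4 * (q/(2*(q-2))) * ∫ ω in {ω | (m:ℝ) < |X ω|^q}, |X ω|^q ∂P := by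
    intro n
    rw [← hBeq]
    calc (∑ k ∈ Finset.range n, if m ≤ k then
        variance (fun ω => Y k ω - (σ / Real.sqrt (variance
          (fun ω' => if |X ω'| ≤ (k : ℝ) ^ (1 / q) then X ω' else 0) P)) * Y k ω) P'
          / (k : ℝ) ^ (2 / q) else 0)
        ≤ ∑ k ∈ Finset.range n, ∫ ω, (if m ≤ k then
            (2/(k:ℝ)^(2/q)) * (if (k:ℝ) < |X ω|^q then X ω^2 else 0) else 0) ∂P := by
          apply Finset.sum_le_sum
          intro k _
          by_cases hk : m ≤ k
          · rw [if_pos hk]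
            have hkpos : (0:ℝ) < (k:ℝ) := by
              have : 1 ≤ k := le_trans hm hk
              exact_mod_cast Nat.lt_of_lt_of_le Nat.zero_lt_one this
            have hc : (0:ℝ) < (k:ℝ)^(2/q) := Real.rpow_pos_of_pos hkpos _
            have hI : ∫ ω, (if m ≤ k then
                (2/(k:ℝ)^(2/q)) * (if (k:ℝ) < |X ω|^q then X ω^2 else 0) else 0) ∂P
                = (2/(k:ℝ)^(2/q)) * ∫ ω, (if (k:ℝ) < |X ω|^q then X ω^2 else 0) ∂P := by
              simp only [if_pos hk]
              exact integral_const_mul _ _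
            rw [hI]
            calc variance (fun ω => Y k ω - (σ / Real.sqrt (variance
                  (fun ω' => if |X ω'| ≤ (k : ℝ) ^ (1 / q) then X ω' else 0) P)) * Y k ω) P'
                  / (k : ℝ) ^ (2 / q)
                ≤ (2 * ∫ ω, (if (k:ℝ) < |X ω|^q then X ω^2 else 0) ∂P) / (k:ℝ)^(2/q) := by
                  gcongr
                  exact key k hk
              _ = (2/(k:ℝ)^(2/q)) * ∫ ω, (if (k:ℝ) < |X ω|^q then X ω^2 else 0) ∂P := by
                  ring
          · rw [if_neg hk]
            simp only [if_neg hk]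
            rw [integral_zero]
      _ = ∫ ω, (∑ k ∈ Finset.range n, if m ≤ k then
            (2/(k:ℝ)^(2/q)) * (if (k:ℝ) < |X ω|^q then X ω^2 else 0) else 0) ∂P :=
          (integral_finset_sum _ (fun k _ => hHint k)).symm
      _ ≤ ∫ ω, (if (m:ℝ) < |X ω|^q then (2*(q/(q-2))) * |X ω|^q else 0) ∂P := by
          apply integral_mono (integrable_finset_sum _ (fun k _ => hHint k)) hBint
          intro ω
          exact sum_bound q hq m n hm (X ω)
  constructor
  · exact summable_of_sum_range_le hFnonneg hchain
  · exact Real.tsum_le_of_sum_range_le hFnonneg hchain
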